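/- Under a rigging transformation with background gauge fields λ ≠ 0, W ∈ ℝ, Z ∈ V* satisfying n2·W + Z(n) = 0 (determining v = W·n + P(Z,·)♯), the transformed rigging data satisfies l' = λ(l + Z) and l2' = λ²( l2 + 2W + P(Z,Z) − n2·W² ). -/
import Mathlib


/-- Rigging transformation encoded by gauge fields (λ, W, Z) with n2·W + Z(n) = 0 and
v = W·n + P(Z,·)♯: the transformed rigging data is l' = λ(l + Z) and
l2' = λ²(l2 + 2W + P(Z,Z) − n2·W²). -/
theorem stmt_4
    (V : Type*) [AddCommGroup V] [Module ℝ V] [FiniteDimensional ℝ V]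
    (h : V →ₗ[ℝ] V →ₗ[ℝ] ℝ) (hsymm : ∀ X Y : V, h X Y = h Y X)
    (l : Module.Dual ℝ V) (l2 : ℝ)
    (P : Module.Dual ℝ V →ₗ[ℝ] Module.Dual ℝ V →ₗ[ℝ] ℝ)
    (Psymm : ∀ ω χ : Module.Dual ℝ V, P ω χ = P χ ω)
    (n : V) (n2 : ℝ)
    (c1 : ∀ (ω : Module.Dual ℝ V) (X : V), P ω (h X) + ω n * l X = ω X)
    (c2 : ∀ ω : Module.Dual ℝ V, P ω l + l2 * ω n = 0)
    (c3 : l n + n2 * l2 = 1)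
    (c4 : ∀ X : V, h n X + n2 * l X = 0)
    (lam : ℝ) (hlam : lam ≠ 0) (W : ℝ) (Z : Module.Dual ℝ V)
    (hc : n2 * W + Z n = 0)
    (vP : V) (hvP : ∀ ω : Module.Dual ℝ V, ω vP = P Z ω) :
    let v : V := W • n + vP
    (lam • (l + h v) = lam • (l + Z)) ∧
    (lam ^ 2 * (l2 + 2 * l v + h v v)
      = lam ^ 2 * (l2 + 2 * W + P Z Z - n2 * W ^ 2)) := by
  intro v
  have hvZ : ∀ X : V, h v X = Z X := by
    intro X
    have h1 := c1 Z X
    have h2 : h X vP = P Z (h X) := hvP (h X)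
    have h4 := c4 X
    have : h v X = W * h n X + h X vP := by
      simp [v, map_add, map_smul, hsymm vP X]
    rw [this, h2]
    have hZn : Z n = -(n2 * W) := by linarith
    rw [hZn] at h1
    linear_combination h1 + W * h4
  have hv : h v = Z := by
    ext X; exact hvZ X
  have hlv : l v = W := by
    have h2 : l vP = P Z l := hvP l
    have hc2 := c2 Z
    have hZn : Z n = -(n2 * W) := by linarith
    have : l v = W * l n + l vP := by simp [v]
    rw [this, h2]
    rw [hZn] at hc2
    linear_combination hc2 + W * c3
  constructor
  · rw [hv]
  · have hvv : h v v = Z v := by rw [hv]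
    have hZv : Z v = W * Z n + P Z Z := by
      have := hvP Z
      simp [v, this]
    have hZn : Z n = -(n2 * W) := by linarith
    rw [hvv, hZv, hlv, hZn]
    ring
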